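/- Let ≺ be an acyclic binary relation on a finite set r, and define X ≪ Y by: for all x ∈ X \ Y there exists y ∈ Y \ X with x ≺ y. Then ≪ is antisymmetric: if X ≪ Y and Y ≪ X then X = Y. -/
import Mathlib


/-- A relation is acyclic if no element is related to itself by the transitive closure. -/
def Acyclic {α : Type*} (prec : α → α → Prop) : Prop :=
  ∀ x, ¬ Relation.TransGen prec x x

/-- The global preference order on sets of tuples: `X ≪ Y`. -/
def ll {α : Type*} (prec : α → α → Prop) (X Y : Set α) : Prop :=
  ∀ x ∈ X \ Y, ∃ y ∈ Y \ X, prec x y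

/-- Closed neighborhood of `x` in the conflict graph. -/
def nbhd {α : Type*} (conflict : α → α → Prop) (x : α) : Set α :=
  {x} ∪ {y | conflict x y}

/-- The winnow operator: elements of `s` not dominated by any element of `s`. -/
def winnow {α : Type*} (prec : α → α → Prop) (s : Set α) : Set α :=
  {t ∈ s | ¬ ∃ t' ∈ s, prec t t'}

/-- A repair: a maximal subset of `r` containing no conflicting pair. -/
def IsRepair {α : Type*} (r : Set α) (conflict : α → α → Prop) (X : Set α) : Prop :=
  X ⊆ r ∧ (∀ a ∈ X, ∀ b ∈ X, ¬ conflict a b) ∧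
    ∀ y ∈ r, y ∉ X → ∃ a ∈ X, conflict y a

/-- A locally preferred repair: obtainable by iteratively choosing an undominated
tuple and removing it together with its conflict neighborhood. -/
def IsLRepair {α : Type*} (r : Set α) (conflict prec : α → α → Prop) (X : Set α) : Prop :=
  ∃ (n : ℕ) (x : Fin n → α), Function.Injective x ∧ X = Set.range x ∧
    (∀ i : Fin n, x i ∈ winnow prec (r \ {y | ∃ j, j < i ∧ y ∈ nbhd conflict (x j)})) ∧
    winnow prec (r \ {y | ∃ i, y ∈ nbhd conflict (x i)}) = ∅

/-- A globally preferred repair: a `≪`-maximal repair. -/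
def IsGRepair {α : Type*} (r : Set α) (conflict prec : α → α → Prop) (X : Set α) : Prop :=
  IsRepair r conflict X ∧ ∀ Y, IsRepair r conflict Y → ll prec X Y → Y = X

/-- the relation ≪ induced by an acyclic priority is antisymmetric. -/
theorem ll_antisymm {α : Type*} (r : Set α) (hr : r.Finite) (prec : α → α → Prop)
    (hacyc : Acyclic prec) (X Y : Set α) (hX : X ⊆ r) (hY : Y ⊆ r)
    (hXY : ll prec X Y) (hYX : ll prec Y X) : X = Y := by
  by_contra hne
  set S : Set α := (X \ Y) ∪ (Y \ X) with hSdef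
  have hSsub : S ⊆ r := by
    rintro a (ha | ha)
    · exact hX ha.1
    · exact hY ha.1
  have hSfin : S.Finite := hr.subset hSsub
  have hSne : S.Nonempty := by
    rw [Set.nonempty_iff_ne_empty]
    intro h
    have hmem := Set.eq_empty_iff_forall_notMem.1 h
    apply hne
    ext a
    constructor
    · intro ha
      by_contra hb
      exact hmem a (Or.inl ⟨ha, hb⟩)
    · intro ha
      by_contra hb
      exact hmem a (Or.inr ⟨ha, hb⟩)
  have hstep : ∀ s, s ∈ S → ∃ t, t ∈ S ∧ prec s t := by
    rintro s (hs | hs)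
    · obtain ⟨t, ht, hpt⟩ := hXY s hs
      exact ⟨t, Or.inr ht, hpt⟩
    · obtain ⟨t, ht, hpt⟩ := hYX s hs
      exact ⟨t, Or.inl ht, hpt⟩
  choose f hfS hfp using hstep
  obtain ⟨x0, hx0⟩ := hSne
  let g : ℕ → {a // a ∈ S} := fun n => Nat.rec ⟨x0, hx0⟩ (fun _ p => ⟨f p.1 p.2, hfS p.1 p.2⟩) n
  have hgp : ∀ n, prec (g n).1 (g (n+1)).1 := fun n => hfp (g n).1 (g n).2
  have chain : ∀ m n, m < n → Relation.TransGen prec (g m).1 (g n).1 := by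
    intro m n hmn
    induction n with
    | zero => omega
    | succ k ih =>
      rcases Nat.lt_succ_iff_lt_or_eq.1 hmn with h | h
      · exact (ih h).tail (hgp k)
      · subst h; exact Relation.TransGen.single (hgp m)
  have : Finite {a // a ∈ S} := hSfin.to_subtype
  obtain ⟨m, n, hmn, heq⟩ := Finite.exists_ne_map_eq_of_infinite g
  rcases hmn.lt_or_gt with h | h
  · exact hacyc (g m).1 (heq ▸ chain m n h)
  · exact hacyc (g n).1 (heq ▸ chain n m h)
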